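/- For every t ∈ (0,1) and every x ∈ ℝ^d, the map t ↦ v*(x, t) is differentiable and ∂_t v*(x, t) = −((1+t²)/(1−t²)²) x + (2t/(1−t²)²) m_t(x) + ((1+t²)/(1−t²)³) Cov_t(x) x − (t/(1−t²)³) (s_t(x) − q_t(x) m_t(x)). -/

import Mathlib

open MeasureTheory

/-- The Gaussian kernel `g_t(x, x₁) = exp(-‖x - t x₁‖² / (2(1-t²)))`. -/
noncomputable def gKer (d : ℕ) (t : ℝ) (x x₁ : EuclideanSpace ℝ (Fin d)) : ℝ :=
  Real.exp (-‖x - t • x₁‖ ^ 2 / (2 * (1 - t ^ 2)))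

/-- `φ_t(x) = ∫ g_t(x, x₁) dπ₁(x₁)`. -/
noncomputable def phiFn (d : ℕ) (π₁ : MeasureTheory.Measure (EuclideanSpace ℝ (Fin d))) (t : ℝ)
    (x : EuclideanSpace ℝ (Fin d)) : ℝ :=
  ∫ x₁, gKer d t x x₁ ∂π₁

/-- `m_t(x) = φ_t(x)⁻¹ ∫ x₁ g_t(x, x₁) dπ₁(x₁)`. -/
noncomputable def mFn (d : ℕ) (π₁ : MeasureTheory.Measure (EuclideanSpace ℝ (Fin d))) (t : ℝ)
    (x : EuclideanSpace ℝ (Fin d)) : EuclideanSpace ℝ (Fin d) :=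
  (phiFn d π₁ t x)⁻¹ • ∫ x₁, gKer d t x x₁ • x₁ ∂π₁

/-- The velocity field `v*(x, t) = (1/(1-t²)) m_t(x) - (t/(1-t²)) x`. -/
noncomputable def vStar (d : ℕ) (π₁ : MeasureTheory.Measure (EuclideanSpace ℝ (Fin d)))
    (x : EuclideanSpace ℝ (Fin d)) (t : ℝ) : EuclideanSpace ℝ (Fin d) :=
  (1 / (1 - t ^ 2)) • mFn d π₁ t x - (t / (1 - t ^ 2)) • x

/-- `M_t(x) = φ_t(x)⁻¹ ∫ x₁ x₁ᵀ g_t(x, x₁) dπ₁(x₁)` as a `d × d` matrix. -/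
noncomputable def MMat (d : ℕ) (π₁ : MeasureTheory.Measure (EuclideanSpace ℝ (Fin d))) (t : ℝ)
    (x : EuclideanSpace ℝ (Fin d)) : Matrix (Fin d) (Fin d) ℝ :=
  Matrix.of fun i j => (phiFn d π₁ t x)⁻¹ * ∫ x₁, gKer d t x x₁ * (x₁ i * x₁ j) ∂π₁

/-- The conditional covariance `Cov_t(x) = M_t(x) - m_t(x) m_t(x)ᵀ`. -/
noncomputable def covMat (d : ℕ) (π₁ : MeasureTheory.Measure (EuclideanSpace ℝ (Fin d))) (t : ℝ)
    (x : EuclideanSpace ℝ (Fin d)) : Matrix (Fin d) (Fin d) ℝ :=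
  MMat d π₁ t x - Matrix.of fun i j => mFn d π₁ t x i * mFn d π₁ t x j

/-- `s_t(x) = φ_t(x)⁻¹ ∫ x₁ ‖x₁‖² g_t(x, x₁) dπ₁(x₁)`. -/
noncomputable def sFn (d : ℕ) (π₁ : MeasureTheory.Measure (EuclideanSpace ℝ (Fin d))) (t : ℝ)
    (x : EuclideanSpace ℝ (Fin d)) : EuclideanSpace ℝ (Fin d) :=
  (phiFn d π₁ t x)⁻¹ • ∫ x₁, (‖x₁‖ ^ 2 * gKer d t x x₁) • x₁ ∂π₁

/-- `q_t(x) = φ_t(x)⁻¹ ∫ ‖x₁‖² g_t(x, x₁) dπ₁(x₁)`. -/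
noncomputable def qFn (d : ℕ) (π₁ : MeasureTheory.Measure (EuclideanSpace ℝ (Fin d))) (t : ℝ)
    (x : EuclideanSpace ℝ (Fin d)) : ℝ :=
  (phiFn d π₁ t x)⁻¹ * ∫ x₁, ‖x₁‖ ^ 2 * gKer d t x x₁ ∂π₁

/-! ### Auxiliary definitions and lemmas -/

/-- The logarithmic time-derivative weight of the Gaussian kernel. -/
noncomputable def wFn (d : ℕ) (t : ℝ) (x x₁ : EuclideanSpace ℝ (Fin d)) : ℝ :=
  ((1 + t ^ 2) * (inner ℝ x x₁ : ℝ) - t * ‖x₁‖ ^ 2 - t * ‖x‖ ^ 2) / (1 - t ^ 2) ^ 2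

lemma real_inner_euc {d : ℕ} (x y : EuclideanSpace ℝ (Fin d)) :
    (inner ℝ x y : ℝ) = ∑ j, x j * y j := by
  rw [PiLp.inner_apply]; simp [RCLike.inner_apply]
  exact Finset.sum_congr rfl fun _ _ => mul_comm _ _

lemma gKer_eq (d : ℕ) (t : ℝ) (x x₁ : EuclideanSpace ℝ (Fin d)) :
    gKer d t x x₁ =
      Real.exp ((-‖x‖ ^ 2 + 2 * (inner ℝ x x₁ : ℝ) * t - ‖x₁‖ ^ 2 * t ^ 2) / (2 * (1 - t ^ 2))) := by
  unfold gKer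
  congr 1
  have h : ‖x - t • x₁‖ ^ 2 = ‖x‖ ^ 2 - 2 * (inner ℝ x (t • x₁) : ℝ) + ‖t • x₁‖ ^ 2 :=
    norm_sub_sq_real x (t • x₁)
  rw [h, real_inner_smul_right, norm_smul]
  simp only [Real.norm_eq_abs, mul_pow, sq_abs]
  ring

lemma gKer_pos (d : ℕ) (t : ℝ) (x x₁ : EuclideanSpace ℝ (Fin d)) : 0 < gKer d t x x₁ :=
  Real.exp_pos _

lemma gKer_le_one (d : ℕ) {t : ℝ} (ht : t ^ 2 < 1) (x x₁ : EuclideanSpace ℝ (Fin d)) :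
    gKer d t x x₁ ≤ 1 := by
  rw [show gKer d t x x₁ = Real.exp (-‖x - t • x₁‖ ^ 2 / (2 * (1 - t ^ 2))) from rfl,
    Real.exp_le_one_iff]
  have h2 : (0:ℝ) < 2 * (1 - t ^ 2) := by nlinarith
  exact div_nonpos_of_nonpos_of_nonneg (neg_nonpos.mpr (by positivity)) h2.le

lemma abs_gKer_le_one (d : ℕ) {t : ℝ} (ht : t ^ 2 < 1) (x x₁ : EuclideanSpace ℝ (Fin d)) :
    |gKer d t x x₁| ≤ 1 := by
  rw [abs_of_pos (gKer_pos d t x x₁)]; exact gKer_le_one d ht x x₁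

private lemma key_w (a b c t : ℝ) (h : (1:ℝ) - t ^ 2 ≠ 0) :
    ((1 + t ^ 2) * b - t * c - t * a) / (1 - t ^ 2) ^ 2 =
      ((2 * b - c * ((2:ℕ) * t ^ 1)) * (2 * (1 - t ^ 2)) -
        (-a + 2 * b * t - c * t ^ 2) * (2 * -((2:ℕ) * t ^ 1))) / (2 * (1 - t ^ 2)) ^ 2 := by
  push_cast
  field_simp
  ring

lemma hasDerivAt_gKer (d : ℕ) {t : ℝ} (ht : t ^ 2 < 1) (x x₁ : EuclideanSpace ℝ (Fin d)) :
    HasDerivAt (fun s => gKer d s x x₁) (gKer d t x x₁ * wFn d t x x₁) t := by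
  have hden : (1 : ℝ) - t ^ 2 ≠ 0 := by nlinarith
  set a := ‖x‖ ^ 2 with ha
  set b := (inner ℝ x x₁ : ℝ) with hb
  set c := ‖x₁‖ ^ 2 with hc
  have hden2 : (2 : ℝ) * (1 - t ^ 2) ≠ 0 := by
    intro h; exact hden (by linarith [(mul_eq_zero.mp h).resolve_left (by norm_num)])
  have hnum : HasDerivAt (fun s : ℝ => -a + 2 * b * s - c * s ^ 2)
      (2 * b - c * ((2 : ℕ) * t ^ 1)) t := by
    have := (((hasDerivAt_id t).const_mul (2 * b)).const_add (-a)).sub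
      ((hasDerivAt_pow 2 t).const_mul c)
    simpa [Pi.sub_def] using this
  have hD : HasDerivAt (fun s : ℝ => 2 * (1 - s ^ 2)) (2 * -((2 : ℕ) * t ^ 1)) t :=
    (((hasDerivAt_pow 2 t).const_sub 1).const_mul 2)
  have hexp := (hnum.div hD hden2).exp
  have hfun : (fun s : ℝ => Real.exp ((-a + 2 * b * s - c * s ^ 2) / (2 * (1 - s ^ 2))))
      = fun s => gKer d s x x₁ := by
    funext s
    rw [gKer_eq d s x x₁, ← hb]
  simp only [Pi.div_apply] at hexp
  rw [hfun] at hexp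
  have hval : gKer d t x x₁ * wFn d t x x₁ =
      Real.exp ((-a + 2 * b * t - c * t ^ 2) / (2 * (1 - t ^ 2))) *
        (((2 * b - c * ((2:ℕ) * t ^ 1)) * (2 * (1 - t ^ 2)) -
          (-a + 2 * b * t - c * t ^ 2) * (2 * -((2:ℕ) * t ^ 1))) / (2 * (1 - t ^ 2)) ^ 2) := by
    rw [gKer_eq d t x x₁, ← hb]
    congr 1
    rw [wFn, ← ha, ← hb, ← hc]
    exact key_w a b c t hden
  rw [hval]
  exact hexp

lemma norm_sq_le_dim {d : ℕ} {x₁ : EuclideanSpace ℝ (Fin d)}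
    (hx : ∀ i, x₁ i ∈ Set.Icc (0:ℝ) 1) : ‖x₁‖ ^ 2 ≤ d := by
  rw [EuclideanSpace.norm_eq, Real.sq_sqrt (by positivity)]
  calc ∑ i, ‖x₁ i‖ ^ 2 ≤ ∑ _i : Fin d, 1 := Finset.sum_le_sum fun i _ => by
        have h := hx i; rw [Real.norm_eq_abs, sq_abs]; nlinarith [h.1, h.2]
    _ = d := by simp

lemma norm_le_sqrt_dim {d : ℕ} {x₁ : EuclideanSpace ℝ (Fin d)}
    (hx : ∀ i, x₁ i ∈ Set.Icc (0:ℝ) 1) : ‖x₁‖ ≤ Real.sqrt d := by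
  rw [show (‖x₁‖ : ℝ) = Real.sqrt (‖x₁‖ ^ 2) from (Real.sqrt_sq (norm_nonneg _)).symm]
  exact Real.sqrt_le_sqrt (norm_sq_le_dim hx)

lemma abs_wFn_le {d : ℕ} {r s : ℝ} (hr0 : 0 ≤ r) (hr1 : r < 1) (hs : |s| ≤ r)
    (x : EuclideanSpace ℝ (Fin d)) {x₁ : EuclideanSpace ℝ (Fin d)}
    (hx₁ : ∀ i, x₁ i ∈ Set.Icc (0:ℝ) 1) :
    |wFn d s x x₁| ≤ (2 * ‖x‖ * Real.sqrt d + d + ‖x‖ ^ 2) / (1 - r ^ 2) ^ 2 := by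
  have hs2 : s ^ 2 ≤ r ^ 2 := by rw [← sq_abs]; exact pow_le_pow_left₀ (abs_nonneg s) hs 2
  have hs1 : |s| ≤ 1 := le_trans hs hr1.le
  have hnum : |(1 + s ^ 2) * (inner ℝ x x₁ : ℝ) - s * ‖x₁‖ ^ 2 - s * ‖x‖ ^ 2|
      ≤ 2 * ‖x‖ * Real.sqrt d + d + ‖x‖ ^ 2 := by
    have h1 : |(1 + s ^ 2) * (inner ℝ x x₁ : ℝ)| ≤ 2 * (‖x‖ * Real.sqrt d) := by
      rw [abs_mul]
      have hb : |(inner ℝ x x₁ : ℝ)| ≤ ‖x‖ * Real.sqrt d := by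
        calc |(inner ℝ x x₁ : ℝ)| ≤ ‖x‖ * ‖x₁‖ := abs_real_inner_le_norm x x₁
          _ ≤ ‖x‖ * Real.sqrt d :=
            mul_le_mul_of_nonneg_left (norm_le_sqrt_dim hx₁) (norm_nonneg x)
      have h1s : |1 + s ^ 2| ≤ 2 := by rw [abs_of_pos (by positivity)]; nlinarith
      exact mul_le_mul h1s hb (abs_nonneg _) (by norm_num)
    have h2 : |s * ‖x₁‖ ^ 2| ≤ (d:ℝ) := by
      rw [abs_mul, abs_of_nonneg (by positivity : (0:ℝ) ≤ ‖x₁‖ ^ 2)]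
      calc |s| * ‖x₁‖ ^ 2 ≤ 1 * (d:ℝ) :=
            mul_le_mul hs1 (norm_sq_le_dim hx₁) (by positivity) (by norm_num)
        _ = d := one_mul _
    have h3 : |s * ‖x‖ ^ 2| ≤ ‖x‖ ^ 2 := by
      rw [abs_mul, abs_of_nonneg (by positivity : (0:ℝ) ≤ ‖x‖ ^ 2)]
      calc |s| * ‖x‖ ^ 2 ≤ 1 * ‖x‖ ^ 2 :=
        mul_le_mul_of_nonneg_right hs1 (by positivity)
        _ = ‖x‖ ^ 2 := one_mul _
    calc |(1 + s ^ 2) * (inner ℝ x x₁ : ℝ) - s * ‖x₁‖ ^ 2 - s * ‖x‖ ^ 2|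
        ≤ |(1 + s ^ 2) * (inner ℝ x x₁ : ℝ)| + |s * ‖x₁‖ ^ 2| + |s * ‖x‖ ^ 2| := by
          calc _ ≤ |(1 + s ^ 2) * (inner ℝ x x₁ : ℝ) - s * ‖x₁‖ ^ 2| + |s * ‖x‖ ^ 2| :=
                abs_sub _ _
            _ ≤ _ := by gcongr; exact abs_sub _ _
      _ ≤ 2 * (‖x‖ * Real.sqrt d) + d + ‖x‖ ^ 2 := by gcongr
      _ = 2 * ‖x‖ * Real.sqrt d + d + ‖x‖ ^ 2 := by ring
  have hq1 : (0:ℝ) < 1 - r ^ 2 := by nlinarith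
  have hq2 : 1 - r ^ 2 ≤ 1 - s ^ 2 := by linarith
  have hden : (1 - r ^ 2) ^ 2 ≤ (1 - s ^ 2) ^ 2 := by nlinarith
  have hdenr : (0:ℝ) < (1 - r ^ 2) ^ 2 := pow_pos hq1 2
  rw [wFn, abs_div, abs_of_pos (by nlinarith : (0:ℝ) < (1 - s ^ 2) ^ 2)]
  exact div_le_div₀ (by positivity) hnum hdenr hden

lemma integral_smul_coord {d : ℕ} {μ : Measure (EuclideanSpace ℝ (Fin d))}
    {f : EuclideanSpace ℝ (Fin d) → ℝ} (hf : Integrable (fun x₁ => f x₁ • x₁) μ) (i : Fin d) :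
    (∫ x₁, f x₁ • x₁ ∂μ) i = ∫ x₁, f x₁ * x₁ i ∂μ := by
  have h := (EuclideanSpace.proj (𝕜 := ℝ) i).integral_comp_comm hf
  simp only [EuclideanSpace.proj, PiLp.proj_apply, _root_.map_smul, smul_eq_mul] at h
  exact h.symm

lemma toEuclideanLin_coord {d : ℕ} (M : Matrix (Fin d) (Fin d) ℝ)
    (x : EuclideanSpace ℝ (Fin d)) (i : Fin d) :
    Matrix.toEuclideanLin M x i = ∑ j, M i j * x j := by
  have h2 : (Matrix.toEuclideanLin M x) i = Matrix.mulVec M (WithLp.equiv 2 (Fin d → ℝ) x) i := by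
    rfl
  rw [h2]; simp [Matrix.mulVec, dotProduct]

/-- The main splitting identity for `∫ g w h`. -/
lemma split_integral (d : ℕ) (π₁ : Measure (EuclideanSpace ℝ (Fin d))) [IsProbabilityMeasure π₁]
    (hsupp : ∀ᵐ x₁ ∂π₁, ∀ i, x₁ i ∈ Set.Icc (0 : ℝ) 1)
    {t : ℝ} (ht2 : t ^ 2 < 1) (x : EuclideanSpace ℝ (Fin d))
    (h : EuclideanSpace ℝ (Fin d) → ℝ) (hh : Continuous h) (B : ℝ)
    (hB : ∀ x₁, (∀ i, x₁ i ∈ Set.Icc (0:ℝ) 1) → |h x₁| ≤ B) :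
    ∫ x₁, gKer d t x x₁ * wFn d t x x₁ * h x₁ ∂π₁ =
      ((1 + t ^ 2) * ∑ j, x j * ∫ x₁, gKer d t x x₁ * h x₁ * x₁ j ∂π₁
        - t * ∫ x₁, ‖x₁‖ ^ 2 * (gKer d t x x₁ * h x₁) ∂π₁
        - t * ‖x‖ ^ 2 * ∫ x₁, gKer d t x x₁ * h x₁ ∂π₁) / (1 - t ^ 2) ^ 2 := by
  have hne : (1:ℝ) - t ^ 2 ≠ 0 := by nlinarith
  have hne2 : ((1:ℝ) - t ^ 2) ^ 2 ≠ 0 := pow_ne_zero _ hne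
  have hB0 : 0 ≤ B := le_trans (abs_nonneg _)
    (hB 0 (fun i => by simp [Set.mem_Icc]))
  have hgc : Continuous fun x₁ : EuclideanSpace ℝ (Fin d) => gKer d t x x₁ := by
    unfold gKer; fun_prop
  have hcoord : ∀ j : Fin d, Continuous fun x₁ : EuclideanSpace ℝ (Fin d) => x₁ j :=
    fun j => (EuclideanSpace.proj (𝕜 := ℝ) j).continuous
  have hbd : ∀ (f : EuclideanSpace ℝ (Fin d) → ℝ), Continuous f → ∀ (B' : ℝ),
      (∀ x₁, (∀ i, x₁ i ∈ Set.Icc (0:ℝ) 1) → |f x₁| ≤ B') → Integrable f π₁ :=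
    fun f hf B' hb => Integrable.mono' (integrable_const B') hf.aestronglyMeasurable
      (hsupp.mono fun x₁ hx₁ => by rw [Real.norm_eq_abs]; exact hb x₁ hx₁)
  have hgh : ∀ x₁, (∀ i, x₁ i ∈ Set.Icc (0:ℝ) 1) → |gKer d t x x₁ * h x₁| ≤ B := by
    intro x₁ hx₁
    rw [abs_mul]
    calc |gKer d t x x₁| * |h x₁| ≤ 1 * B :=
          mul_le_mul (abs_gKer_le_one d ht2 x x₁) (hB x₁ hx₁) (abs_nonneg _) zero_le_one
      _ = B := one_mul B
  have igh : Integrable (fun x₁ => gKer d t x x₁ * h x₁) π₁ :=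
    hbd _ (hgc.mul hh) B hgh
  have igj : ∀ j : Fin d, Integrable (fun x₁ => gKer d t x x₁ * h x₁ * x₁ j) π₁ := by
    intro j
    refine hbd _ ((hgc.mul hh).mul (hcoord j)) B ?_
    intro x₁ hx₁
    rw [abs_mul]
    have hj : |x₁ j| ≤ 1 := by have := hx₁ j; rw [abs_le]; exact ⟨by linarith [this.1], this.2⟩
    calc |gKer d t x x₁ * h x₁| * |x₁ j| ≤ B * 1 :=
          mul_le_mul (hgh x₁ hx₁) hj (abs_nonneg _) hB0
      _ = B := mul_one B
  have iq : Integrable (fun x₁ => ‖x₁‖ ^ 2 * (gKer d t x x₁ * h x₁)) π₁ := by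
    refine hbd _ ((continuous_norm.pow 2).mul (hgc.mul hh)) (d * B) ?_
    intro x₁ hx₁
    rw [abs_mul, abs_of_nonneg (by positivity : (0:ℝ) ≤ ‖x₁‖ ^ 2)]
    exact mul_le_mul (norm_sq_le_dim hx₁) (hgh x₁ hx₁) (abs_nonneg _) (by positivity)
  have hpt : ∀ x₁ : EuclideanSpace ℝ (Fin d),
      gKer d t x x₁ * wFn d t x x₁ * h x₁ * (1 - t ^ 2) ^ 2 =
        (1 + t ^ 2) * ∑ j, x j * (gKer d t x x₁ * h x₁ * x₁ j)
          - t * (‖x₁‖ ^ 2 * (gKer d t x x₁ * h x₁))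
          - t * ‖x‖ ^ 2 * (gKer d t x x₁ * h x₁) := by
    intro x₁
    have hs : ∑ j, x j * (gKer d t x x₁ * h x₁ * x₁ j)
        = gKer d t x x₁ * h x₁ * ∑ j, x j * x₁ j := by
      rw [Finset.mul_sum]; exact Finset.sum_congr rfl fun j _ => by ring
    rw [hs, wFn, real_inner_euc x x₁]
    field_simp
  have step : ∫ x₁, gKer d t x x₁ * wFn d t x x₁ * h x₁ * (1 - t ^ 2) ^ 2 ∂π₁ =
      (1 + t ^ 2) * ∑ j, x j * ∫ x₁, gKer d t x x₁ * h x₁ * x₁ j ∂π₁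
        - t * ∫ x₁, ‖x₁‖ ^ 2 * (gKer d t x x₁ * h x₁) ∂π₁
        - t * ‖x‖ ^ 2 * ∫ x₁, gKer d t x x₁ * h x₁ ∂π₁ := by
    simp only [hpt]
    have i1 : Integrable (fun x₁ => (1 + t ^ 2) *
        ∑ j, x j * (gKer d t x x₁ * h x₁ * x₁ j)) π₁ :=
      (integrable_finset_sum _ fun j _ => (igj j).const_mul (x j)).const_mul _
    have i2 : Integrable (fun x₁ => t * (‖x₁‖ ^ 2 * (gKer d t x x₁ * h x₁))) π₁ :=
      iq.const_mul t
    have i3 : Integrable (fun x₁ => t * ‖x‖ ^ 2 * (gKer d t x x₁ * h x₁)) π₁ :=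
      igh.const_mul _
    have i12 : Integrable (fun x₁ => (1 + t ^ 2) *
        (∑ j, x j * (gKer d t x x₁ * h x₁ * x₁ j))
        - t * (‖x₁‖ ^ 2 * (gKer d t x x₁ * h x₁))) π₁ := i1.sub i2
    rw [integral_sub i12 i3, integral_sub i1 i2, integral_const_mul,
      integral_const_mul, integral_const_mul,
      integral_finset_sum _ (fun j _ => (igj j).const_mul (x j))]
    simp only [integral_const_mul]
  rw [eq_div_iff hne2, ← integral_mul_const]
  exact step

set_option maxHeartbeats 1600000 in
/-- For every `t ∈ (0,1)` and every `x`, the map `t ↦ v*(x,t)` is differentiable, with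
`∂ₜ v*(x,t) = -((1+t²)/(1-t²)²) x + (2t/(1-t²)²) m_t(x) + ((1+t²)/(1-t²)³) Cov_t(x) x
- (t/(1-t²)³)(s_t(x) - q_t(x) m_t(x))`. -/
theorem time_derivative_velocity
    (d : ℕ) (hd : 1 ≤ d)
    (π₁ : Measure (EuclideanSpace ℝ (Fin d))) [IsProbabilityMeasure π₁]
    (hsupp : ∀ᵐ x₁ ∂π₁, ∀ i, x₁ i ∈ Set.Icc (0 : ℝ) 1)
    (t : ℝ) (ht : t ∈ Set.Ioo (0 : ℝ) 1) (x : EuclideanSpace ℝ (Fin d)) :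
    HasDerivAt (fun s => vStar d π₁ x s)
      ((-((1 + t ^ 2) / (1 - t ^ 2) ^ 2)) • x
        + (2 * t / (1 - t ^ 2) ^ 2) • mFn d π₁ t x
        + ((1 + t ^ 2) / (1 - t ^ 2) ^ 3) • Matrix.toEuclideanLin (covMat d π₁ t x) x
        - (t / (1 - t ^ 2) ^ 3) • (sFn d π₁ t x - qFn d π₁ t x • mFn d π₁ t x)) t := by
  obtain ⟨ht0, ht1⟩ := ht
  have h1t : (0:ℝ) < 1 - t ^ 2 := by nlinarith
  have hne : (1:ℝ) - t ^ 2 ≠ 0 := ne_of_gt h1t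
  have ht2 : t ^ 2 < 1 := by nlinarith
  set sd := Real.sqrt d with hsd
  have hsd0 : 0 ≤ sd := Real.sqrt_nonneg _
  set ε := (1 - t) / 2 with hε
  have hε_pos : 0 < ε := by rw [hε]; linarith
  set r := (1 + t) / 2 with hr
  have hr0 : 0 ≤ r := by rw [hr]; linarith
  have hr1 : r < 1 := by rw [hr]; linarith
  have hball : ∀ s ∈ Metric.ball t ε, |s| ≤ r := by
    intro s hs
    rw [Metric.mem_ball, Real.dist_eq] at hs
    have h := abs_lt.mp hs
    rw [abs_le, hr]
    constructor <;> [nlinarith [h.1]; nlinarith [h.2]]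
  have hballsq : ∀ s ∈ Metric.ball t ε, s ^ 2 < 1 := by
    intro s hs
    have h := hball s hs
    have : s ^ 2 ≤ r ^ 2 := by rw [← sq_abs]; exact pow_le_pow_left₀ (abs_nonneg s) h 2
    nlinarith
  set C := (2 * ‖x‖ * sd + d + ‖x‖ ^ 2) / (1 - r ^ 2) ^ 2 with hC
  have hC0 : 0 ≤ C := by rw [hC]; positivity
  have hgc : ∀ s : ℝ, Continuous fun x₁ : EuclideanSpace ℝ (Fin d) => gKer d s x x₁ := by
    intro s; unfold gKer; fun_prop
  have hcoord : ∀ j : Fin d, Continuous fun x₁ : EuclideanSpace ℝ (Fin d) => x₁ j :=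
    fun j => (EuclideanSpace.proj (𝕜 := ℝ) j).continuous
  have hin : Continuous fun x₁ : EuclideanSpace ℝ (Fin d) => (inner ℝ x x₁ : ℝ) :=
    continuous_const.inner continuous_id
  have hwc : ∀ s : ℝ, Continuous fun x₁ : EuclideanSpace ℝ (Fin d) => wFn d s x x₁ := by
    intro s; unfold wFn
    exact (((continuous_const.mul hin).sub
      (continuous_const.mul (continuous_norm.pow 2))).sub continuous_const).div_const _
  have hbd : ∀ (f : EuclideanSpace ℝ (Fin d) → ℝ), Continuous f → ∀ (B' : ℝ),
      (∀ x₁, (∀ i, x₁ i ∈ Set.Icc (0:ℝ) 1) → |f x₁| ≤ B') → Integrable f π₁ :=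
    fun f hf B' hb => Integrable.mono' (integrable_const B') hf.aestronglyMeasurable
      (hsupp.mono fun x₁ hx₁ => by rw [Real.norm_eq_abs]; exact hb x₁ hx₁)
  -- integrability of the kernel
  have hint_g : Integrable (fun x₁ => gKer d t x x₁) π₁ :=
    hbd _ (hgc t) 1 (fun x₁ _ => abs_gKer_le_one d ht2 x x₁)
  -- integrability of the vector integrand
  have hint_gv : Integrable (fun x₁ => gKer d t x x₁ • x₁) π₁ := by
    refine Integrable.mono' (integrable_const sd)
      (((hgc t).smul continuous_id).aestronglyMeasurable) (hsupp.mono fun x₁ hx₁ => ?_)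
    rw [norm_smul, Real.norm_eq_abs]
    calc |gKer d t x x₁| * ‖x₁‖ ≤ 1 * sd :=
          mul_le_mul (abs_gKer_le_one d ht2 x x₁) (norm_le_sqrt_dim hx₁) (norm_nonneg _)
            zero_le_one
      _ = sd := one_mul sd
  -- derivative of φ
  have hD0 := hasDerivAt_integral_of_dominated_loc_of_deriv_le (μ := π₁)
    (F := fun s x₁ => gKer d s x x₁)
    (F' := fun s x₁ => gKer d s x x₁ * wFn d s x x₁)
    (bound := fun _ => C) (Metric.ball_mem_nhds t hε_pos)
    (Filter.Eventually.of_forall fun s => (hgc s).aestronglyMeasurable) hint_g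
    (((hgc t).mul (hwc t)).aestronglyMeasurable)
    (hsupp.mono fun x₁ hx₁ s hs => by
      rw [Real.norm_eq_abs, abs_mul]
      calc |gKer d s x x₁| * |wFn d s x x₁| ≤ 1 * C :=
            mul_le_mul (abs_gKer_le_one d (hballsq s hs) x x₁)
              (abs_wFn_le hr0 hr1 (hball s hs) x hx₁) (abs_nonneg _) zero_le_one
        _ = C := one_mul C)
    (integrable_const C)
    (Filter.Eventually.of_forall fun x₁ s hs => hasDerivAt_gKer d (hballsq s hs) x x₁)
  -- derivative of the vector integral
  have hD1 := hasDerivAt_integral_of_dominated_loc_of_deriv_le (μ := π₁)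
    (F := fun s x₁ => gKer d s x x₁ • x₁)
    (F' := fun s x₁ => (gKer d s x x₁ * wFn d s x x₁) • x₁)
    (bound := fun _ => C * sd) (Metric.ball_mem_nhds t hε_pos)
    (Filter.Eventually.of_forall fun s => ((hgc s).smul continuous_id).aestronglyMeasurable)
    hint_gv
    ((((hgc t).mul (hwc t)).smul continuous_id).aestronglyMeasurable)
    (hsupp.mono fun x₁ hx₁ s hs => by
      rw [norm_smul, Real.norm_eq_abs, abs_mul]
      have h1 : |gKer d s x x₁| * |wFn d s x x₁| ≤ C := by
        calc |gKer d s x x₁| * |wFn d s x x₁| ≤ 1 * C :=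
              mul_le_mul (abs_gKer_le_one d (hballsq s hs) x x₁)
                (abs_wFn_le hr0 hr1 (hball s hs) x hx₁) (abs_nonneg _) zero_le_one
          _ = C := one_mul C
      exact mul_le_mul h1 (norm_le_sqrt_dim hx₁) (norm_nonneg _) hC0)
    (integrable_const (C * sd))
    (Filter.Eventually.of_forall fun x₁ s hs =>
      (hasDerivAt_gKer d (hballsq s hs) x x₁).smul_const x₁)
  -- positivity of φ
  have hΦpos : 0 < phiFn d π₁ t x := by
    set c := Real.exp (-(‖x‖ + sd) ^ 2 / (2 * (1 - t ^ 2))) with hcdef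
    have hcle : ∀ᵐ x₁ ∂π₁, c ≤ gKer d t x x₁ := by
      refine hsupp.mono fun x₁ hx₁ => ?_
      rw [hcdef, show gKer d t x x₁ = Real.exp (-‖x - t • x₁‖ ^ 2 / (2 * (1 - t ^ 2))) from rfl,
        Real.exp_le_exp]
      have hD : (0:ℝ) < 2 * (1 - t ^ 2) := by nlinarith
      rw [div_le_div_iff_of_pos_right hD, neg_le_neg_iff]
      have hb : ‖x - t • x₁‖ ≤ ‖x‖ + sd := by
        calc ‖x - t • x₁‖ ≤ ‖x‖ + ‖t • x₁‖ := norm_sub_le x (t • x₁)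
          _ = ‖x‖ + |t| * ‖x₁‖ := by rw [norm_smul, Real.norm_eq_abs]
          _ ≤ ‖x‖ + 1 * sd := by
              have h1 : |t| ≤ 1 := by rw [abs_of_pos ht0]; linarith
              exact add_le_add_right (mul_le_mul h1 (norm_le_sqrt_dim hx₁)
                (norm_nonneg _) zero_le_one) _
          _ = ‖x‖ + sd := by ring
      exact pow_le_pow_left₀ (norm_nonneg _) hb 2
    have hle : c ≤ phiFn d π₁ t x := by
      have h := integral_mono_ae (integrable_const c) hint_g hcle
      simpa [phiFn] using h
    exact lt_of_lt_of_le (Real.exp_pos _) hle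
  have hΦne : phiFn d π₁ t x ≠ 0 := ne_of_gt hΦpos
  -- derivative of m
  have hΦ' : HasDerivAt (fun s => phiFn d π₁ s x)
      (∫ x₁, gKer d t x x₁ * wFn d t x x₁ ∂π₁) t := hD0.2
  have hm' : HasDerivAt (fun s => mFn d π₁ s x)
      ((phiFn d π₁ t x)⁻¹ • (∫ x₁, (gKer d t x x₁ * wFn d t x x₁) • x₁ ∂π₁)
        + (-(∫ x₁, gKer d t x x₁ * wFn d t x x₁ ∂π₁) / (phiFn d π₁ t x) ^ 2) •
          (∫ x₁, gKer d t x x₁ • x₁ ∂π₁)) t :=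
    (hΦ'.inv hΦne).smul hD1.2
  -- derivative of the scalar coefficients
  have ha : HasDerivAt (fun s : ℝ => 1 / (1 - s ^ 2)) (2 * t / (1 - t ^ 2) ^ 2) t := by
    have h : HasDerivAt (fun s : ℝ => 1 / (1 - s ^ 2)) _ t := (hasDerivAt_const t (1:ℝ)).div ((hasDerivAt_pow 2 t).const_sub 1) hne
    convert h using 1
    push_cast
    ring
  have hb : HasDerivAt (fun s : ℝ => s / (1 - s ^ 2)) ((1 + t ^ 2) / (1 - t ^ 2) ^ 2) t := by
    have h : HasDerivAt (fun s : ℝ => s / (1 - s ^ 2)) _ t := (hasDerivAt_id t).div ((hasDerivAt_pow 2 t).const_sub 1) hne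
    convert h using 1
    push_cast [id]
    field_simp
    ring
  have hV := (ha.smul hm').sub (hb.smul_const x)
  have hVfull : HasDerivAt (fun s => vStar d π₁ x s)
      ((1 / (1 - t ^ 2)) • ((phiFn d π₁ t x)⁻¹ •
            (∫ x₁, (gKer d t x x₁ * wFn d t x x₁) • x₁ ∂π₁)
          + (-(∫ x₁, gKer d t x x₁ * wFn d t x x₁ ∂π₁) / (phiFn d π₁ t x) ^ 2) •
            (∫ x₁, gKer d t x x₁ • x₁ ∂π₁))
        + (2 * t / (1 - t ^ 2) ^ 2) • mFn d π₁ t x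
        - ((1 + t ^ 2) / (1 - t ^ 2) ^ 2) • x) t := hV
  convert hVfull using 1
  -- It remains to identify the two expressions for the derivative.
  have iring : ∀ {f g : EuclideanSpace ℝ (Fin d) → ℝ}, (∀ a, f a = g a) →
      ∫ a, f a ∂π₁ = ∫ a, g a ∂π₁ := fun h => integral_congr_ae (Filter.Eventually.of_forall h)
  -- integrability facts for the coordinate extraction
  have int_gwv : Integrable (fun x₁ => (gKer d t x x₁ * wFn d t x x₁) • x₁) π₁ := hD1.1
  have int_sv : Integrable (fun x₁ => (‖x₁‖ ^ 2 * gKer d t x x₁) • x₁) π₁ := by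
    refine Integrable.mono' (integrable_const ((d:ℝ) * sd))
      (((continuous_norm.pow 2).mul (hgc t)).smul continuous_id).aestronglyMeasurable
      (hsupp.mono fun x₁ hx₁ => ?_)
    rw [norm_smul, Real.norm_eq_abs, abs_mul, abs_of_nonneg (by positivity : (0:ℝ) ≤ ‖x₁‖ ^ 2)]
    have h1 : ‖x₁‖ ^ 2 * |gKer d t x x₁| ≤ d := by
      calc ‖x₁‖ ^ 2 * |gKer d t x x₁| ≤ (d:ℝ) * 1 :=
            mul_le_mul (norm_sq_le_dim hx₁) (abs_gKer_le_one d ht2 x x₁) (abs_nonneg _)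
              (by positivity)
        _ = d := mul_one _
    exact mul_le_mul h1 (norm_le_sqrt_dim hx₁) (norm_nonneg _) (by positivity)
  -- coordinates
  have hJ : ∀ j, (∫ x₁, gKer d t x x₁ • x₁ ∂π₁) j = ∫ x₁, gKer d t x x₁ * x₁ j ∂π₁ :=
    integral_smul_coord hint_gv
  have hI' : ∀ i, (∫ x₁, (gKer d t x x₁ * wFn d t x x₁) • x₁ ∂π₁) i
      = ∫ x₁, gKer d t x x₁ * wFn d t x x₁ * x₁ i ∂π₁ := fun i => integral_smul_coord int_gwv i
  have hS : ∀ i, (∫ x₁, (‖x₁‖ ^ 2 * gKer d t x x₁) • x₁ ∂π₁) i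
      = ∫ x₁, (‖x₁‖ ^ 2 * gKer d t x x₁) * x₁ i ∂π₁ := integral_smul_coord int_sv
  have hmc : ∀ j, mFn d π₁ t x j
      = (phiFn d π₁ t x)⁻¹ * ∫ x₁, gKer d t x x₁ * x₁ j ∂π₁ := by
    intro j
    rw [mFn, PiLp.smul_apply, hJ j, smul_eq_mul]
  have hsc : ∀ i, sFn d π₁ t x i
      = (phiFn d π₁ t x)⁻¹ * ∫ x₁, (‖x₁‖ ^ 2 * gKer d t x x₁) * x₁ i ∂π₁ := by
    intro i
    rw [sFn, PiLp.smul_apply, hS i, smul_eq_mul]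
  -- the two splitting identities
  have e1 : ∫ x₁, gKer d t x x₁ * wFn d t x x₁ ∂π₁ =
      ((1 + t ^ 2) * ∑ j, x j * ∫ x₁, gKer d t x x₁ * x₁ j ∂π₁
        - t * ∫ x₁, ‖x₁‖ ^ 2 * gKer d t x x₁ ∂π₁
        - t * ‖x‖ ^ 2 * phiFn d π₁ t x) / (1 - t ^ 2) ^ 2 := by
    have r1 : ∀ j : Fin d, (∫ x₁, gKer d t x x₁ * 1 * x₁ j ∂π₁)
        = ∫ x₁, gKer d t x x₁ * x₁ j ∂π₁ := fun j => iring fun a => by ring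
    have r2 : (∫ x₁, ‖x₁‖ ^ 2 * (gKer d t x x₁ * 1) ∂π₁)
        = ∫ x₁, ‖x₁‖ ^ 2 * gKer d t x x₁ ∂π₁ := iring fun a => by ring
    have r3 : (∫ x₁, gKer d t x x₁ * 1 ∂π₁) = phiFn d π₁ t x := by
      rw [phiFn]; exact iring fun a => by ring
    have h : ∫ x₁, gKer d t x x₁ * wFn d t x x₁ * 1 ∂π₁ =
        ((1 + t ^ 2) * ∑ j, x j * ∫ x₁, gKer d t x x₁ * 1 * x₁ j ∂π₁
          - t * ∫ x₁, ‖x₁‖ ^ 2 * (gKer d t x x₁ * 1) ∂π₁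
          - t * ‖x‖ ^ 2 * ∫ x₁, gKer d t x x₁ * 1 ∂π₁) / (1 - t ^ 2) ^ 2 :=
      split_integral d π₁ hsupp ht2 x (fun _ => 1) continuous_const 1
        (fun x₁ _ => by norm_num)
    simp only [r1] at h
    rw [r2, r3] at h
    calc ∫ x₁, gKer d t x x₁ * wFn d t x x₁ ∂π₁
        = ∫ x₁, gKer d t x x₁ * wFn d t x x₁ * 1 ∂π₁ := iring fun a => by ring
      _ = _ := h
  have e2 : ∀ i, ∫ x₁, gKer d t x x₁ * wFn d t x x₁ * x₁ i ∂π₁ =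
      ((1 + t ^ 2) * ∑ j, x j * ∫ x₁, gKer d t x x₁ * (x₁ i * x₁ j) ∂π₁
        - t * ∫ x₁, (‖x₁‖ ^ 2 * gKer d t x x₁) * x₁ i ∂π₁
        - t * ‖x‖ ^ 2 * ∫ x₁, gKer d t x x₁ * x₁ i ∂π₁) / (1 - t ^ 2) ^ 2 := by
    intro i
    have hbi : ∀ x₁ : EuclideanSpace ℝ (Fin d), (∀ k, x₁ k ∈ Set.Icc (0:ℝ) 1) → |x₁ i| ≤ 1 := by
      intro x₁ hx₁
      have := hx₁ i; rw [abs_le]; exact ⟨by linarith [this.1], this.2⟩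
    have rK : ∀ j : Fin d, (∫ x₁, gKer d t x x₁ * x₁ i * x₁ j ∂π₁)
        = ∫ x₁, gKer d t x x₁ * (x₁ i * x₁ j) ∂π₁ := fun j => iring fun a => by ring
    have rS : (∫ x₁, ‖x₁‖ ^ 2 * (gKer d t x x₁ * x₁ i) ∂π₁)
        = ∫ x₁, (‖x₁‖ ^ 2 * gKer d t x x₁) * x₁ i ∂π₁ := iring fun a => by ring
    have h : ∫ x₁, gKer d t x x₁ * wFn d t x x₁ * x₁ i ∂π₁ =
        ((1 + t ^ 2) * ∑ j, x j * ∫ x₁, gKer d t x x₁ * x₁ i * x₁ j ∂π₁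
          - t * ∫ x₁, ‖x₁‖ ^ 2 * (gKer d t x x₁ * x₁ i) ∂π₁
          - t * ‖x‖ ^ 2 * ∫ x₁, gKer d t x x₁ * x₁ i ∂π₁) / (1 - t ^ 2) ^ 2 :=
      split_integral d π₁ hsupp ht2 x (fun x₁ => x₁ i) (hcoord i) 1 hbi
    simp only [rK] at h
    rw [rS] at h
    exact h
  -- now prove the vector identity coordinatewise
  ext i
  have hcov : Matrix.toEuclideanLin (covMat d π₁ t x) x i =
      (phiFn d π₁ t x)⁻¹ * (∑ j, x j * ∫ x₁, gKer d t x x₁ * (x₁ i * x₁ j) ∂π₁)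
        - (phiFn d π₁ t x)⁻¹ * (∫ x₁, gKer d t x x₁ * x₁ i ∂π₁) * (phiFn d π₁ t x)⁻¹ *
          (∑ j, x j * ∫ x₁, gKer d t x x₁ * x₁ j ∂π₁) := by
    rw [toEuclideanLin_coord]
    calc ∑ j, covMat d π₁ t x i j * x j
        = ∑ j, ((phiFn d π₁ t x)⁻¹ * (x j * ∫ x₁, gKer d t x x₁ * (x₁ i * x₁ j) ∂π₁)
            - ((phiFn d π₁ t x)⁻¹ * (∫ x₁, gKer d t x x₁ * x₁ i ∂π₁) * (phiFn d π₁ t x)⁻¹)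
              * (x j * ∫ x₁, gKer d t x x₁ * x₁ j ∂π₁)) := by
          refine Finset.sum_congr rfl fun j _ => ?_
          rw [covMat, Matrix.sub_apply, MMat, Matrix.of_apply, Matrix.of_apply, hmc i, hmc j]
          ring
      _ = _ := by
          rw [Finset.sum_sub_distrib, ← Finset.mul_sum, ← Finset.mul_sum]
  simp only [PiLp.add_apply, PiLp.sub_apply, PiLp.smul_apply, smul_eq_mul]
  rw [hcov, hsc i, hmc i, hI' i, hJ i, e1, e2 i,
    show qFn d π₁ t x = (phiFn d π₁ t x)⁻¹ * ∫ x₁, ‖x₁‖ ^ 2 * gKer d t x x₁ ∂π₁ from rfl]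
  set Φ := phiFn d π₁ t x
  set Ji := ∫ x₁, gKer d t x x₁ * x₁ i ∂π₁
  set P := ∑ j, x j * ∫ x₁, gKer d t x x₁ * (x₁ i * x₁ j) ∂π₁
  set R := ∑ j, x j * ∫ x₁, gKer d t x x₁ * x₁ j ∂π₁
  set Q := ∫ x₁, ‖x₁‖ ^ 2 * gKer d t x x₁ ∂π₁
  set Si := ∫ x₁, (‖x₁‖ ^ 2 * gKer d t x x₁) * x₁ i ∂π₁
  field_simp
  ring
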